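/- Let T, N, B₁, B₂ : ℝ → ℝ⁴ be a Frenet frame of a partially null curve in E₁⁴ with Frenet equations T' = κN, N' = -κT + τB₁, B₁' = 0, B₂' = -τN, where κ and τ are nonzero constants. Then the curve is a k-type slant helix for k ∈ {0, 1, 3}, with an explicit constant axis D = (τ/κ)T + B₁ + B₂. -/

import Mathlib

noncomputable def g (v w : Fin 4 → ℝ) : ℝ :=
  -(v 0 * w 0) + v 1 * w 1 + v 2 * w 2 + v 3 * w 3

lemma g_lin (v w x y : Fin 4 → ℝ) (a : ℝ) :
    g v (a • w + x + y) = a * g v w + g v x + g v y := by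
  simp [g, Pi.add_apply, Pi.smul_apply, smul_eq_mul]; ring

lemma g_symm (v w : Fin 4 → ℝ) : g v w = g w v := by
  simp [g]; ring

theorem stmt7
    (T N B₁ B₂ : ℝ → Fin 4 → ℝ) (κ τ : ℝ)
    (hκ0 : κ ≠ 0) (hτ0 : τ ≠ 0)
    (hT : ∀ s, HasDerivAt T (κ • N s) s)
    (hN : ∀ s, HasDerivAt N ((-κ) • T s + τ • B₁ s) s)
    (hB₁ : ∀ s, HasDerivAt B₁ (0 : Fin 4 → ℝ) s)
    (hB₂ : ∀ s, HasDerivAt B₂ ((-τ) • N s) s)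
    (hTT : ∀ s, g (T s) (T s) = 1) (hNN : ∀ s, g (N s) (N s) = 1)
    (hB₁B₁ : ∀ s, g (B₁ s) (B₁ s) = 0) (hB₂B₂ : ∀ s, g (B₂ s) (B₂ s) = 0)
    (hB₁B₂ : ∀ s, g (B₁ s) (B₂ s) = 1)
    (hTN : ∀ s, g (T s) (N s) = 0) (hTB₁ : ∀ s, g (T s) (B₁ s) = 0)
    (hTB₂ : ∀ s, g (T s) (B₂ s) = 0) (hNB₁ : ∀ s, g (N s) (B₁ s) = 0)
    (hNB₂ : ∀ s, g (N s) (B₂ s) = 0) :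
    (∀ s, HasDerivAt (fun r => (τ / κ) • T r + B₁ r + B₂ r) (0 : Fin 4 → ℝ) s) ∧
    (∀ s, (τ / κ) • T s + B₁ s + B₂ s ≠ 0) ∧
    (∃ a : ℝ, ∀ s, g (T s) ((τ / κ) • T s + B₁ s + B₂ s) = a) ∧
    (∃ a : ℝ, ∀ s, g (N s) ((τ / κ) • T s + B₁ s + B₂ s) = a) ∧
    (∃ a : ℝ, ∀ s, g (B₂ s) ((τ / κ) • T s + B₁ s + B₂ s) = a) := by
  refine ⟨?_, ?_, ⟨τ / κ, ?_⟩, ⟨0, ?_⟩, ⟨1, ?_⟩⟩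
  · intro s
    have h := (((hT s).const_smul (τ / κ)).add (hB₁ s)).add (hB₂ s)
    convert h using 1
    case e'_4 => rfl
    case e'_5 => rfl
    case e'_6 => rfl
    case e'_8 => rfl
    rw [smul_smul, div_mul_cancel₀ _ hκ0]
    ext i
    simp [Pi.add_apply, Pi.smul_apply, smul_eq_mul]
  · intro s h
    have h1 : g (B₁ s) ((τ / κ) • T s + B₁ s + B₂ s) = 1 := by
      rw [g_lin, g_symm (B₁ s) (T s), hTB₁, hB₁B₁, hB₁B₂]; ring
    rw [h] at h1
    simp [g] at h1
  · intro s; rw [g_lin, hTT, hTB₁, hTB₂]; ring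
  · intro s; rw [g_lin, g_symm (N s) (T s), hTN, hNB₁, hNB₂]; ring
  · intro s
    rw [g_lin, g_symm (B₂ s) (T s), hTB₂, g_symm (B₂ s) (B₁ s), hB₁B₂, hB₂B₂]; ring
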